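/- arXiv:2404.02024 — 3 statements merged into one kernel-verified Lean document; each statement's English description precedes it below -/
import Mathlib

section
/- Suppose P and P' are partitions of a finite set V of sizes s and t respectively, and 0 < ε < 1. Then there is an equipartition Q of V with at most ε⁻¹·s·t parts such that Q ε-approximately refines both P and P'; that is, for every Q₀ ∈ Q there exist P₀ ∈ P and P₀' ∈ P' with |Q₀ \ P₀| ≤ ε|Q₀| and |Q₀ \ P₀'| ≤ ε|Q₀|. -/
open scoped Classical

lemma exists_le_sum' {ι : Type*} [DecidableEq ι] (s : Finset ι) (f : ι → ℕ) :
    ∀ K : ℕ, K ≤ ∑ i ∈ s, f i → ∃ h : ι → ℕ, (∀ i ∈ s, h i ≤ f i) ∧ ∑ i ∈ s, h i = K := by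
  induction s using Finset.cons_induction with
  | empty =>
      intro K hK
      simp only [Finset.sum_empty, Nat.le_zero] at hK
      exact ⟨fun _ => 0, by simp, by simp [hK]⟩
  | cons a s ha ih =>
      intro K hK
      rw [Finset.sum_cons] at hK
      obtain ⟨h, h1, h2⟩ := ih (K - f a) (by omega)
      refine ⟨fun i => if i = a then min K (f a) else h i, ?_, ?_⟩
      · intro i hi
        dsimp only
        rcases Finset.mem_cons.mp hi with rfl | hi2
        · simp
        · rw [if_neg (by rintro rfl; exact ha hi2)]
          exact h1 i hi2
      · rw [Finset.sum_cons, if_pos rfl]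
        have hc : ∑ i ∈ s, (if i = a then min K (f a) else h i) = ∑ i ∈ s, h i :=
          Finset.sum_congr rfl fun i hi => by rw [if_neg (by rintro rfl; exact ha hi)]
        rw [hc, h2]
        omega

lemma exists_split' {ι α : Type*} [DecidableEq ι] [DecidableEq α] (s : Finset ι) (g : ι → ℕ) :
    ∀ W : Finset α, ∑ i ∈ s, g i = W.card →
      ∃ f : ι → Finset α,
        (∀ i ∈ s, f i ⊆ W ∧ (f i).card = g i) ∧
        (∀ i ∈ s, ∀ j ∈ s, i ≠ j → Disjoint (f i) (f j)) ∧
        s.biUnion f = W := by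
  induction s using Finset.cons_induction with
  | empty =>
      intro W hW
      refine ⟨fun _ => ∅, by simp, by simp, ?_⟩
      simp only [Finset.biUnion_empty]
      rw [Finset.sum_empty] at hW
      exact (Finset.card_eq_zero.mp hW.symm).symm
  | cons a s ha ih =>
      intro W hW
      rw [Finset.sum_cons] at hW
      obtain ⟨A, hAW, hAcard⟩ := Finset.exists_subset_card_eq (s := W) (n := g a) (by omega)
      obtain ⟨f, hf1, hf2, hf3⟩ := ih (W \ A) (by rw [Finset.card_sdiff_of_subset hAW]; omega)
      have hAdisj : ∀ i ∈ s, Disjoint A (f i) :=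
        fun i hi => Finset.disjoint_sdiff.mono_right (hf1 i hi).1
      refine ⟨fun i => if i = a then A else f i, ?_, ?_, ?_⟩
      · intro i hi
        dsimp only
        rcases Finset.mem_cons.mp hi with rfl | hi2
        · simp [hAW, hAcard]
        · rw [if_neg (by rintro rfl; exact ha hi2)]
          exact ⟨((hf1 i hi2).1).trans (Finset.sdiff_subset), (hf1 i hi2).2⟩
      · intro i hi j hj hij
        dsimp only
        rcases Finset.mem_cons.mp hi with rfl | hi2 <;> rcases Finset.mem_cons.mp hj with rfl | hj2
        · exact absurd rfl hij
        · rw [if_pos rfl, if_neg (by rintro rfl; exact ha hj2)]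
          exact hAdisj j hj2
        · rw [if_pos rfl, if_neg (by rintro rfl; exact ha hi2)]
          exact (hAdisj i hi2).symm
        · rw [if_neg (by rintro rfl; exact ha hi2), if_neg (by rintro rfl; exact ha hj2)]
          exact hf2 i hi2 j hj2 hij
      · rw [Finset.cons_eq_insert, Finset.biUnion_insert, if_pos rfl]
        have hc : ∀ i ∈ s, (if i = a then A else f i) = f i :=
          fun i hi => if_neg (by rintro rfl; exact ha hi)
        rw [Finset.biUnion_congr rfl hc, hf3, Finset.union_sdiff_of_subset hAW]

lemma numeric_main {ε σ K r m L n : ℝ} (hε : 0 < ε) (hε1 : ε < 1) (hσ2 : 2 ≤ σ)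
    (hr : r ≤ σ) (h0r : 0 ≤ r) (hεK_ge : σ - ε ≤ ε * K) (hεK_le : ε * K ≤ σ) (hK1 : 1 ≤ K)
    (hm1 : 1 ≤ m) (hKm : K * m ≤ n) (hL : L ≤ (1 - ε) * m + 2) (hL0 : 0 ≤ L)
    (hnN : 4 * (σ / ε + σ) / ε ^ 2 ≤ n) : (K + r) * L ≤ n := by
  have hnpos : (0 : ℝ) ≤ n :=
    le_trans (mul_nonneg (by linarith) (by linarith)) hKm
  have step1 : (K + r) * L ≤ (K + σ) * ((1 - ε) * m + 2) := by
    apply mul_le_mul (by linarith) hL hL0 (by linarith)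
  have key : (K + σ) * (1 - ε) ≤ K * (1 - ε ^ 2 / 2) := by
    nlinarith [mul_le_mul_of_nonneg_right hεK_ge (by linarith : (0:ℝ) ≤ 1 - ε / 2),
      mul_le_mul_of_nonneg_right hσ2 hε.le]
  have step2 : (K + σ) * ((1 - ε) * m) ≤ (1 - ε ^ 2 / 2) * (K * m) := by
    nlinarith [mul_le_mul_of_nonneg_right key (by linarith : (0:ℝ) ≤ m)]
  have hε2 : ε ^ 2 ≤ 1 := by nlinarith
  have step3 : (1 - ε ^ 2 / 2) * (K * m) ≤ (1 - ε ^ 2 / 2) * n :=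
    mul_le_mul_of_nonneg_left hKm (by linarith)
  have step4 : 2 * (K + σ) ≤ ε ^ 2 * n / 2 := by
    have hKσ : K ≤ σ / ε := by
      rw [le_div_iff₀ hε]; linarith
    rw [div_le_iff₀ (by positivity : (0:ℝ) < ε ^ 2)] at hnN
    linarith
  have expand : (K + σ) * ((1 - ε) * m + 2) = (K + σ) * ((1 - ε) * m) + 2 * (K + σ) := by ring
  linarith

def IsPartitionOf {α : Type*} [DecidableEq α] (P : Finset (Finset α)) (V : Finset α) : Prop :=
  (∀ p ∈ P, p.Nonempty) ∧ (P : Set (Finset α)).PairwiseDisjoint id ∧ P.biUnion id = V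

set_option maxHeartbeats 2000000 in
/-- given partitions `P, P'` of `V` of sizes `s, t` and `0 < ε < 1`,
if `V` is sufficiently large then there is an equipartition `Q` of `V` with at most
`ε⁻¹·s·t` parts which `ε`-approximately refines both `P` and `P'`. -/
theorem stmt_5 {α : Type*} [DecidableEq α] (ε : ℝ) (hε : 0 < ε) (hε1 : ε < 1) (s t : ℕ) :
    ∃ N : ℕ, ∀ (V : Finset α) (P P' : Finset (Finset α)),
      N ≤ V.card →
      IsPartitionOf P V → IsPartitionOf P' V → P.card = s → P'.card = t →
      ∃ Q : Finset (Finset α), IsPartitionOf Q V ∧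
        (Q.card : ℝ) ≤ ε⁻¹ * (s : ℝ) * (t : ℝ) ∧
        (∀ q₁ ∈ Q, ∀ q₂ ∈ Q, ((q₁.card : ℤ) - (q₂.card : ℤ)).natAbs ≤ 1) ∧
        ∀ q ∈ Q, (∃ p ∈ P, ((q \ p).card : ℝ) ≤ ε * (q.card : ℝ)) ∧
          (∃ p ∈ P', ((q \ p).card : ℝ) ≤ ε * (q.card : ℝ)) := by
  classical
  set σ : ℝ := ((s * t : ℕ) : ℝ) with hσdef
  set K : ℕ := ⌊ε⁻¹ * σ⌋₊ with hKdef
  refine ⟨⌈(4 * (σ / ε + σ)) / ε ^ 2⌉₊ + K + 2, ?_⟩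
  intro V P P' hN hP hP' hs ht
  obtain ⟨hPne, hPdisj, hPun⟩ := hP
  obtain ⟨hP'ne, hP'disj, hP'un⟩ := hP'
  have hV1 : 1 ≤ V.card := by omega
  have hVne : V.Nonempty := Finset.card_pos.mp hV1
  -- P and P' are nonempty
  have hsge : 1 ≤ s := by
    rcases Finset.eq_empty_or_nonempty P with h | h
    · rw [h] at hPun; simp at hPun; rw [← hPun] at hV1; simp at hV1
    · rw [← hs]; exact Finset.card_pos.mpr h
  have htge : 1 ≤ t := by
    rcases Finset.eq_empty_or_nonempty P' with h | h
    · rw [h] at hP'un; simp at hP'un; rw [← hP'un] at hV1; simp at hV1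
    · rw [← ht]; exact Finset.card_pos.mpr h
  have hPuniq : ∀ p₁ ∈ P, ∀ p₂ ∈ P, ∀ a : α, a ∈ p₁ → a ∈ p₂ → p₁ = p₂ := by
    intro p₁ h₁ p₂ h₂ a ha₁ ha₂
    by_contra hne
    exact Finset.disjoint_left.mp (hPdisj h₁ h₂ hne) ha₁ ha₂
  have hP'uniq : ∀ p₁ ∈ P', ∀ p₂ ∈ P', ∀ a : α, a ∈ p₁ → a ∈ p₂ → p₁ = p₂ := by
    intro p₁ h₁ p₂ h₂ a ha₁ ha₂
    by_contra hne
    exact Finset.disjoint_left.mp (hP'disj h₁ h₂ hne) ha₁ ha₂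
  by_cases hst : s * t ≤ 1
  · -- degenerate case : s = t = 1
    have hs1 : s = 1 := by nlinarith
    have ht1 : t = 1 := by nlinarith
    obtain ⟨p, hp⟩ := Finset.card_eq_one.mp (hs ▸ hs1 ▸ hs.symm ▸ rfl : P.card = 1)
    obtain ⟨p', hp'⟩ := Finset.card_eq_one.mp (by rw [ht, ht1])
    have hpV : p = V := by rw [hp] at hPun; simpa using hPun
    have hp'V : p' = V := by rw [hp'] at hP'un; simpa using hP'un
    refine ⟨{V}, ⟨?_, ?_, by simp⟩, ?_, ?_, ?_⟩
    · intro q hq; rw [Finset.mem_singleton] at hq; rw [hq]; exact hVne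
    · intro a ha b hb hab
      simp only [Finset.coe_singleton, Set.mem_singleton_iff] at ha hb
      exact absurd (ha.trans hb.symm) hab
    · have h1 : (1 : ℝ) ≤ ε⁻¹ := by
        rw [le_inv_comm₀] <;> simp [hε, hε1.le]
      simp only [Finset.card_singleton, hs1, ht1]
      push_cast
      nlinarith
    · intro q₁ hq₁ q₂ hq₂
      rw [Finset.mem_singleton] at hq₁ hq₂
      rw [hq₁, hq₂]; simp
    · intro q hq
      rw [Finset.mem_singleton] at hq
      constructor
      · exact ⟨p, by rw [hp]; exact Finset.mem_singleton_self _, by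
          rw [hq, hpV]; simp only [Finset.sdiff_self, Finset.card_empty, Nat.cast_zero]; exact mul_nonneg hε.le (Nat.cast_nonneg _)⟩
      · exact ⟨p', by rw [hp']; exact Finset.mem_singleton_self _, by
          rw [hq, hp'V]; simp only [Finset.sdiff_self, Finset.card_empty, Nat.cast_zero]; exact mul_nonneg hε.le (Nat.cast_nonneg _)⟩
  -- main case
  push_neg at hst
  have hσ2 : (2 : ℝ) ≤ σ := by rw [hσdef]; exact_mod_cast hst
  -- the common refinement R
  set R : Finset (Finset α) :=
    ((P ×ˢ P').image fun pp => pp.1 ∩ pp.2).filter (fun u => u.Nonempty) with hRdef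
  have hRmem : ∀ u ∈ R, u.Nonempty ∧ ∃ p ∈ P, ∃ p' ∈ P', u = p ∩ p' := by
    intro u hu
    rw [hRdef, Finset.mem_filter, Finset.mem_image] at hu
    obtain ⟨⟨pp, hpp, hppu⟩, hne⟩ := hu
    rw [Finset.mem_product] at hpp
    exact ⟨hne, pp.1, hpp.1, pp.2, hpp.2, hppu.symm⟩
  have hRcard : R.card ≤ s * t := by
    calc R.card ≤ ((P ×ˢ P').image fun pp => pp.1 ∩ pp.2).card := Finset.card_filter_le _ _
    _ ≤ (P ×ˢ P').card := Finset.card_image_le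
    _ = s * t := by rw [Finset.card_product, hs, ht]
  have hRdisj : ∀ u₁ ∈ R, ∀ u₂ ∈ R, u₁ ≠ u₂ → Disjoint u₁ u₂ := by
    intro u₁ h₁ u₂ h₂ hne
    obtain ⟨_, p₁, hp₁, p₁', hp₁', he₁⟩ := hRmem u₁ h₁
    obtain ⟨_, p₂, hp₂, p₂', hp₂', he₂⟩ := hRmem u₂ h₂
    rw [Finset.disjoint_left]
    intro a ha₁ ha₂
    rw [he₁, Finset.mem_inter] at ha₁
    rw [he₂, Finset.mem_inter] at ha₂
    have e1 : p₁ = p₂ := hPuniq p₁ hp₁ p₂ hp₂ a ha₁.1 ha₂.1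
    have e2 : p₁' = p₂' := hP'uniq p₁' hp₁' p₂' hp₂' a ha₁.2 ha₂.2
    exact hne (by rw [he₁, he₂, e1, e2])
  have hRun : R.biUnion id = V := by
    apply Finset.Subset.antisymm
    · intro a ha
      rw [Finset.mem_biUnion] at ha
      obtain ⟨u, hu, hau⟩ := ha
      obtain ⟨_, p, hp, p', hp', he⟩ := hRmem u hu
      simp only [id_eq] at hau
      rw [he, Finset.mem_inter] at hau
      rw [← hPun]
      exact Finset.mem_biUnion.mpr ⟨p, hp, hau.1⟩
    · intro a ha
      have h1 : ∃ p ∈ P, a ∈ p := by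
        rw [← hPun] at ha; exact Finset.mem_biUnion.mp ha
      have h2 : ∃ p' ∈ P', a ∈ p' := by
        rw [← hP'un] at ha; exact Finset.mem_biUnion.mp ha
      obtain ⟨p, hp, hap⟩ := h1
      obtain ⟨p', hp', hap'⟩ := h2
      refine Finset.mem_biUnion.mpr ⟨p ∩ p', ?_, Finset.mem_inter.mpr ⟨hap, hap'⟩⟩
      rw [hRdef, Finset.mem_filter, Finset.mem_image]
      exact ⟨⟨(p, p'), Finset.mem_product.mpr ⟨hp, hp'⟩, rfl⟩,
        ⟨a, Finset.mem_inter.mpr ⟨hap, hap'⟩⟩⟩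
  have hRsub : ∀ u ∈ R, u ⊆ V := by
    intro u hu
    rw [← hRun]
    exact Finset.subset_biUnion_of_mem id hu
  have hRsum : ∑ u ∈ R, u.card = V.card := by
    rw [← hRun]
    exact (Finset.card_biUnion hRdisj).symm
  -- numeric parameters
  set n : ℕ := V.card with hndef
  set m : ℕ := n / K with hmdef
  set d : ℕ := ⌊ε * (m : ℕ)⌋₊ with hddef
  have hσpos : (0 : ℝ) < σ := by linarith
  have hεinv : (1 : ℝ) < ε⁻¹ := by
    nlinarith [mul_inv_cancel₀ hε.ne', inv_pos.mpr hε]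
  have hK1 : 1 ≤ K := by
    rw [hKdef]
    apply Nat.le_floor
    push_cast
    nlinarith
  have hKreal_le : (K : ℝ) ≤ ε⁻¹ * σ := Nat.floor_le (by positivity)
  have hKreal_gt : ε⁻¹ * σ < (K : ℝ) + 1 := by
    have := Nat.lt_floor_add_one (ε⁻¹ * σ)
    exact_mod_cast this
  have hεK_ge : σ - ε ≤ ε * (K : ℝ) := by
    have h1 : σ < ε * ((K : ℝ) + 1) := by
      calc σ = ε * (ε⁻¹ * σ) := by field_simp
      _ < ε * ((K : ℝ) + 1) := by
        exact mul_lt_mul_of_pos_left hKreal_gt hε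
    nlinarith
  have hεK_le : ε * (K : ℝ) ≤ σ := by
    have := mul_le_mul_of_nonneg_left hKreal_le hε.le
    calc ε * (K:ℝ) ≤ ε * (ε⁻¹ * σ) := this
    _ = σ := by field_simp
  have hnN : (4 * (σ / ε + σ)) / ε ^ 2 ≤ (n : ℝ) := by
    calc (4 * (σ / ε + σ)) / ε ^ 2 ≤ (⌈(4 * (σ / ε + σ)) / ε ^ 2⌉₊ : ℝ) := Nat.le_ceil _
    _ ≤ (n : ℝ) := by exact_mod_cast le_trans (by omega) hN
  have hnK : K + 2 ≤ n := by omega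
  have hm1 : 1 ≤ m := by
    rw [hmdef]
    rw [Nat.one_le_div_iff (by omega)]
    omega
  have hKm : K * m ≤ n := by
    rw [hmdef, mul_comm]
    exact Nat.div_mul_le_self n K
  have hmK : (m : ℝ) ≤ (n : ℝ) / (K : ℝ) := by
    rw [le_div_iff₀ (by exact_mod_cast hK1 : (0:ℝ) < (K:ℝ))]
    exact_mod_cast (by rw [mul_comm] at hKm; exact hKm)
  have hd_le : (d : ℝ) ≤ ε * (m : ℝ) := Nat.floor_le (by positivity)
  have hd_gt : ε * (m : ℝ) < (d : ℝ) + 1 := by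
    have := Nat.lt_floor_add_one (ε * (m : ℝ))
    exact_mod_cast this
  have hdm : d < m := by
    have h1 : (d : ℝ) < (m : ℝ) := by
      have hm1' : (1 : ℝ) ≤ (m : ℝ) := by exact_mod_cast hm1
      have h2 : ε * (m : ℝ) < 1 * (m : ℝ) := mul_lt_mul_of_pos_right hε1 (by linarith)
      linarith
    exact_mod_cast h1
  set L : ℕ := m + 1 - d with hLdef
  have hL1 : 2 ≤ L := by omega
  have hLcast : (L : ℝ) = (m : ℝ) + 1 - (d : ℝ) := by
    rw [hLdef]
    push_cast [Nat.cast_sub (by omega : d ≤ m + 1)]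
    ring
  clear_value σ K n m d L R
  -- the main inequality
  have hmain : (K + R.card) * L ≤ n := by
    have hrR : (R.card : ℝ) ≤ σ := by rw [hσdef]; exact_mod_cast hRcard
    have hmpos : (1 : ℝ) ≤ (m : ℝ) := by exact_mod_cast hm1
    have hLle : (L : ℝ) ≤ (1 - ε) * (m : ℝ) + 2 := by rw [hLcast]; linarith
    have hKmR : (K : ℝ) * m ≤ n := by exact_mod_cast hKm
    have hK1R : (1 : ℝ) ≤ (K : ℝ) := by exact_mod_cast hK1
    have final : ((K : ℝ) + R.card) * L ≤ (n : ℝ) :=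
      numeric_main hε hε1 hσ2 hrR (by positivity) hεK_ge hεK_le hK1R hmpos hKmR hLle
        (by positivity) hnN
    exact_mod_cast final
  set B : ℕ := n % K with hBdef
  have hBK : B < K := by rw [hBdef]; exact Nat.mod_lt _ (by omega)
  have hnKmB : K * m + B = n := by rw [hBdef, hmdef]; exact Nat.div_add_mod n K
  -- supply of cores
  have hsupply : K ≤ ∑ u ∈ R, u.card / L := by
    have h1 : ∀ u ∈ R, u.card ≤ L * (u.card / L) + (L - 1) := by
      intro u _
      have h2 := Nat.div_add_mod u.card L
      have h3 : u.card % L < L := Nat.mod_lt _ (by omega)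
      omega
    have h2 : n ≤ (∑ u ∈ R, L * (u.card / L)) + R.card * (L - 1) := by
      calc n = ∑ u ∈ R, u.card := by rw [hRsum, hndef]
      _ ≤ ∑ u ∈ R, (L * (u.card / L) + (L - 1)) := Finset.sum_le_sum h1
      _ = (∑ u ∈ R, L * (u.card / L)) + R.card * (L - 1) := by
          rw [Finset.sum_add_distrib, Finset.sum_const, smul_eq_mul]
    have h4 : K * L + R.card * L ≤ n := by
      have := hmain; rw [add_mul] at this; exact this
    have h5 : R.card * (L - 1) + R.card ≤ R.card * L := by
      have h6 := Nat.mul_le_mul_left R.card (show L - 1 + 1 ≤ L by omega)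
      rw [Nat.mul_add, Nat.mul_one] at h6
      exact h6
    have h6 : K * L ≤ L * ∑ u ∈ R, u.card / L := by
      rw [Finset.mul_sum]
      linarith
    rw [mul_comm] at h6
    exact Nat.le_of_mul_le_mul_left h6 (by omega)
  obtain ⟨h, hh1, hh2⟩ := exists_le_sum' R (fun u => u.card / L) K hsupply
  have hBle : B ≤ ∑ u ∈ R, h u := by rw [hh2]; omega
  obtain ⟨Bu, hBu1, hBu2⟩ := exists_le_sum' R h B hBle
  -- choose the cores inside each part of R
  have hcore : ∀ u : Finset α, ∃ cf : ℕ → Finset α, u ∈ R →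
      (∀ j ∈ Finset.range (h u), cf j ⊆ u ∧
        (cf j).card = (if j < Bu u then m + 1 else m) - d) ∧
      (∀ j₁ ∈ Finset.range (h u), ∀ j₂ ∈ Finset.range (h u), j₁ ≠ j₂ →
        Disjoint (cf j₁) (cf j₂)) := by
    intro u
    by_cases hu : u ∈ R
    · have htot : ∑ j ∈ Finset.range (h u), ((if j < Bu u then m + 1 else m) - d) ≤ u.card := by
        calc ∑ j ∈ Finset.range (h u), ((if j < Bu u then m + 1 else m) - d)
            ≤ ∑ _j ∈ Finset.range (h u), L := Finset.sum_le_sum (by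
              intro j _; rw [hLdef]; split <;> omega)
        _ = h u * L := by rw [Finset.sum_const, Finset.card_range, smul_eq_mul]
        _ ≤ (u.card / L) * L := Nat.mul_le_mul_right L (hh1 u hu)
        _ ≤ u.card := Nat.div_mul_le_self _ _
      obtain ⟨u', hu'sub, hu'card⟩ := Finset.exists_subset_card_eq htot
      obtain ⟨cf, hcf1, hcf2, _⟩ := exists_split' (Finset.range (h u))
        (fun j => (if j < Bu u then m + 1 else m) - d) u' hu'card.symm
      exact ⟨cf, fun _ => ⟨fun j hj => ⟨((hcf1 j hj).1).trans hu'sub, (hcf1 j hj).2⟩, hcf2⟩⟩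
    · exact ⟨fun _ => ∅, fun hmem => absurd hmem hu⟩
  choose cf hcf using hcore
  -- global index set
  set I : Finset (Finset α × ℕ) :=
    R.biUnion (fun u => (Finset.range (h u)).image fun j => (u, j)) with hIdef
  have hImem : ∀ x : Finset α × ℕ, x ∈ I ↔ x.1 ∈ R ∧ x.2 < h x.1 := by
    intro x
    rw [hIdef, Finset.mem_biUnion]
    constructor
    · rintro ⟨u, hu, hx⟩
      rw [Finset.mem_image] at hx
      obtain ⟨j, hj, rfl⟩ := hx
      exact ⟨hu, by simpa using hj⟩
    · rintro ⟨h1, h2⟩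
      exact ⟨x.1, h1, Finset.mem_image.mpr ⟨x.2, Finset.mem_range.mpr h2, rfl⟩⟩
  have hIsum : ∀ F : Finset α × ℕ → ℕ,
      ∑ x ∈ I, F x = ∑ u ∈ R, ∑ j ∈ Finset.range (h u), F (u, j) := by
    intro F
    rw [hIdef, Finset.sum_biUnion (by
      intro u hu v hv huv
      apply Finset.disjoint_left.mpr
      rintro x hx1 hx2
      rw [Finset.mem_image] at hx1 hx2
      obtain ⟨j, _, rfl⟩ := hx1
      obtain ⟨j', _, he⟩ := hx2
      exact huv (congrArg Prod.fst he).symm)]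
    apply Finset.sum_congr rfl
    intro u _
    rw [Finset.sum_image (by
      intro a _ b _ hab
      exact congrArg Prod.snd hab)]
  have hIcard : I.card = K := by
    rw [Finset.card_eq_sum_ones, hIsum]
    calc ∑ u ∈ R, ∑ _j ∈ Finset.range (h u), 1 = ∑ u ∈ R, h u :=
      Finset.sum_congr rfl (fun u _ => by
        rw [Finset.sum_const, Finset.card_range, smul_eq_mul, mul_one])
    _ = K := hh2
  set g : Finset α × ℕ → ℕ := fun x => if x.2 < Bu x.1 then m + 1 else m with hgdef
  have hgge : ∀ x : Finset α × ℕ, m ≤ g x := by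
    intro x; rw [hgdef]; dsimp only; split <;> omega
  have hgle : ∀ x : Finset α × ℕ, g x ≤ m + 1 := by
    intro x; rw [hgdef]; dsimp only; split <;> omega
  have hgsum : ∑ x ∈ I, g x = n := by
    rw [hIsum]
    have inner : ∀ u ∈ R, ∑ j ∈ Finset.range (h u), g (u, j) = h u * m + Bu u := by
      intro u hu
      have hBh : Bu u ≤ h u := hBu1 u hu
      have e1 : ∀ j ∈ Finset.range (h u), g (u, j) = m + (if j < Bu u then 1 else 0) := by
        intro j _; rw [hgdef]; dsimp only; split <;> omega
      have e2 : (Finset.range (h u)).filter (fun j => j < Bu u) = Finset.range (Bu u) := by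
        ext j
        simp only [Finset.mem_filter, Finset.mem_range]
        omega
      rw [Finset.sum_congr rfl e1, Finset.sum_add_distrib, Finset.sum_const,
        Finset.card_range, smul_eq_mul]
      congr 1
      rw [Finset.sum_boole]
      simp only [Nat.cast_id]
      rw [e2, Finset.card_range]
    rw [Finset.sum_congr rfl inner, Finset.sum_add_distrib, ← Finset.sum_mul, hh2, hBu2]
    exact hnKmB
  set C : Finset α × ℕ → Finset α := fun x => cf x.1 x.2 with hCdef
  have hCsub : ∀ x ∈ I, C x ⊆ x.1 := by
    intro x hx
    obtain ⟨h1, h2⟩ := (hImem x).mp hx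
    exact (((hcf x.1 h1).1) x.2 (Finset.mem_range.mpr h2)).1
  have hCcard : ∀ x ∈ I, (C x).card = g x - d := by
    intro x hx
    obtain ⟨h1, h2⟩ := (hImem x).mp hx
    exact (((hcf x.1 h1).1) x.2 (Finset.mem_range.mpr h2)).2
  have hCdisj : ∀ x ∈ I, ∀ y ∈ I, x ≠ y → Disjoint (C x) (C y) := by
    intro x hx y hy hne
    obtain ⟨hx1, hx2⟩ := (hImem x).mp hx
    obtain ⟨hy1, hy2⟩ := (hImem y).mp hy
    by_cases he : x.1 = y.1
    · have hne2 : x.2 ≠ y.2 := fun h2 => hne (Prod.ext he h2)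
      rw [hCdef]
      dsimp only
      rw [he]
      exact (hcf y.1 hy1).2 x.2 (Finset.mem_range.mpr (he ▸ hx2)) y.2
        (Finset.mem_range.mpr hy2) hne2
    · exact Finset.disjoint_of_subset_left (hCsub x hx)
        (Finset.disjoint_of_subset_right (hCsub y hy) (hRdisj x.1 hx1 y.1 hy1 he))
  have hCsum : (∑ x ∈ I, (C x).card) + K * d = n := by
    have e : ∀ x ∈ I, (C x).card + d = g x := by
      intro x hx
      rw [hCcard x hx]
      have := hgge x
      omega
    have e2 : ∑ x ∈ I, ((C x).card + d) = ∑ x ∈ I, g x := Finset.sum_congr rfl e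
    rw [Finset.sum_add_distrib, Finset.sum_const, smul_eq_mul, hIcard, hgsum] at e2
    exact e2
  have hUcard : (I.biUnion C).card = ∑ x ∈ I, (C x).card := Finset.card_biUnion hCdisj
  have hUsubV : I.biUnion C ⊆ V := by
    intro a ha
    rw [Finset.mem_biUnion] at ha
    obtain ⟨x, hx, hax⟩ := ha
    exact hRsub x.1 ((hImem x).mp hx).1 (hCsub x hx hax)
  set W : Finset α := V \ I.biUnion C with hWdef
  have hWcard : W.card = K * d := by
    rw [hWdef, Finset.card_sdiff_of_subset hUsubV, hUcard, ← hndef]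
    exact Nat.sub_eq_of_eq_add (by rw [← hCsum, Nat.add_comm])
  have hWsum : ∑ _x ∈ I, d = W.card := by
    rw [Finset.sum_const, smul_eq_mul, hIcard, hWcard]
  obtain ⟨D, hD1, hD2, hD3⟩ := exists_split' I (fun _ => d) W hWsum
  have hCD : ∀ x ∈ I, ∀ y ∈ I, Disjoint (C x) (D y) := by
    intro x hx y hy
    rw [Finset.disjoint_left]
    intro a hax hay
    have h1 : a ∈ I.biUnion C := Finset.mem_biUnion.mpr ⟨x, hx, hax⟩
    have h2 : a ∈ W := (hD1 y hy).1 hay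
    rw [hWdef, Finset.mem_sdiff] at h2
    exact h2.2 h1
  have hqcard : ∀ x ∈ I, (C x ∪ D x).card = g x := by
    intro x hx
    rw [Finset.card_union_of_disjoint (hCD x hx x hx), hCcard x hx, (hD1 x hx).2]
    have := hgge x
    omega
  have hqdisj : ∀ x ∈ I, ∀ y ∈ I, x ≠ y → Disjoint (C x ∪ D x) (C y ∪ D y) := by
    intro x hx y hy hne
    simp only [Finset.disjoint_union_left, Finset.disjoint_union_right]
    exact ⟨⟨hCdisj x hx y hy hne, (hCD y hy x hx).symm⟩,
      ⟨hCD x hx y hy, hD2 x hx y hy hne⟩⟩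
  -- the partition Q
  refine ⟨I.image (fun x => C x ∪ D x), ⟨?_, ?_, ?_⟩, ?_, ?_, ?_⟩
  · intro q hq
    obtain ⟨x, hx, rfl⟩ := Finset.mem_image.mp hq
    apply Finset.card_pos.mp
    rw [hqcard x hx]
    have := hgge x
    omega
  · intro q1 h1 q2 h2 hne
    simp only [Finset.coe_image, Set.mem_image, Finset.mem_coe] at h1 h2
    obtain ⟨x, hx, rfl⟩ := h1
    obtain ⟨y, hy, rfl⟩ := h2
    exact hqdisj x hx y hy (fun hxy => hne (by rw [hxy]))
  · have e1 : (I.image fun x => C x ∪ D x).biUnion id = I.biUnion (fun x => C x ∪ D x) := by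
      ext a
      simp only [Finset.mem_biUnion, Finset.mem_image, id_eq]
      constructor
      · rintro ⟨q, ⟨x, hx, rfl⟩, haq⟩
        exact ⟨x, hx, haq⟩
      · rintro ⟨x, hx, hax⟩
        exact ⟨C x ∪ D x, ⟨x, hx, rfl⟩, hax⟩
    rw [e1]
    have e2 : I.biUnion (fun x => C x ∪ D x) = (I.biUnion C) ∪ W := by
      ext a
      simp only [Finset.mem_biUnion, Finset.mem_union]
      constructor
      · rintro ⟨x, hx, hax⟩
        rcases hax with hh | hh
        · exact Or.inl ⟨x, hx, hh⟩
        · exact Or.inr ((hD1 x hx).1 hh)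
      · rintro (⟨x, hx, hax⟩ | haW)
        · exact ⟨x, hx, Or.inl hax⟩
        · rw [← hD3] at haW
          obtain ⟨x, hx, hax⟩ := Finset.mem_biUnion.mp haW
          exact ⟨x, hx, Or.inr hax⟩
    rw [e2, hWdef, Finset.union_sdiff_of_subset hUsubV]
  · have h1 : (I.image fun x => C x ∪ D x).card ≤ K :=
      le_trans Finset.card_image_le (le_of_eq hIcard)
    have h2 : ((I.image fun x => C x ∪ D x).card : ℝ) ≤ (K : ℝ) := by exact_mod_cast h1
    calc ((I.image fun x => C x ∪ D x).card : ℝ) ≤ (K : ℝ) := h2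
    _ ≤ ε⁻¹ * σ := hKreal_le
    _ = ε⁻¹ * s * t := by rw [hσdef]; push_cast; ring
  · intro q1 h1 q2 h2
    obtain ⟨x, hx, rfl⟩ := Finset.mem_image.mp h1
    obtain ⟨y, hy, rfl⟩ := Finset.mem_image.mp h2
    have e1 := hqcard x hx
    have e2 := hqcard y hy
    have g1 := hgge x
    have g2 := hgge y
    have g3 := hgle x
    have g4 := hgle y
    omega
  · intro q hq
    obtain ⟨x, hx, rfl⟩ := Finset.mem_image.mp hq
    obtain ⟨hxR, hxh⟩ := (hImem x).mp hx
    obtain ⟨_, p, hp, p', hp', he⟩ := hRmem x.1 hxR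
    have hcardq : (m : ℝ) ≤ ((C x ∪ D x).card : ℝ) := by
      exact_mod_cast (hqcard x hx).symm ▸ hgge x
    have hkey : ∀ pp : Finset α, x.1 ⊆ pp →
        (((C x ∪ D x) \ pp).card : ℝ) ≤ ε * ((C x ∪ D x).card : ℝ) := by
      intro pp hsub
      have h1 : (C x ∪ D x) \ pp ⊆ D x := by
        intro a ha
        rw [Finset.mem_sdiff] at ha
        rcases Finset.mem_union.mp ha.1 with hh | hh
        · exact absurd (hsub (hCsub x hx hh)) ha.2
        · exact hh
      have h2 : (((C x ∪ D x) \ pp).card : ℝ) ≤ (d : ℝ) := by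
        exact_mod_cast le_trans (Finset.card_le_card h1) (le_of_eq (hD1 x hx).2)
      calc (((C x ∪ D x) \ pp).card : ℝ) ≤ (d : ℝ) := h2
      _ ≤ ε * (m : ℝ) := hd_le
      _ ≤ ε * ((C x ∪ D x).card : ℝ) := mul_le_mul_of_nonneg_left hcardq hε.le
    constructor
    · exact ⟨p, hp, hkey p (by rw [he]; exact Finset.inter_subset_left)⟩
    · exact ⟨p', hp', hkey p' (by rw [he]; exact Finset.inter_subset_right)⟩
end

section
/- Fix d > 0 and 0 < ε < min{d⁸, 2⁻⁸}. Let G = (U ∪ V ∪ W, E) be a tripartite graph in which each of G[U,V], G[U,W], G[V,W] is ε-regular with density at least d. Let d_{UV}, d_{UW}, d_{VW} be the three densities, and let Y = {uv ∈ E ∩ K₂[U,V] : |N_G(u) ∩ N_G(v) ∩ W| = (1 ± ε^{1/8})·d_{UW}·d_{VW}·|W|}. Then |Y| ≥ (1 − ε^{1/8})·|E ∩ K₂[U,V]|. -/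
open scoped Classical

noncomputable section

variable {α : Type*}

/-- Density of the pair `(X, Y)` in the graph `G`. -/
def gdens (G : SimpleGraph α) (X Y : Finset α) : ℝ :=
  (((X ×ˢ Y).filter fun p => G.Adj p.1 p.2).card : ℝ) / ((X.card : ℝ) * (Y.card : ℝ))

/-- The pair `(X, Y)` is `ε`-regular with respect to `G`. -/
def EpsRegular (G : SimpleGraph α) (X Y : Finset α) (ε : ℝ) : Prop :=
  ∀ X' ⊆ X, ∀ Y' ⊆ Y, ε * (X.card : ℝ) ≤ (X'.card : ℝ) → ε * (Y.card : ℝ) ≤ (Y'.card : ℝ) →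
    |gdens G X' Y' - gdens G X Y| ≤ ε

end

open Finset

lemma prod_filter_card {α : Type*} (X Y : Finset α) (P : α → α → Prop) :
    ((X ×ˢ Y).filter fun p => P p.1 p.2).card = ∑ x ∈ X, (Y.filter fun y => P x y).card := by
  rw [Finset.card_filter, Finset.sum_product]
  exact Finset.sum_congr rfl fun x _ => (Finset.card_filter _ _).symm

lemma gdens_nonneg {α : Type*} (G : SimpleGraph α) (X Y : Finset α) : 0 ≤ gdens G X Y :=
  div_nonneg (by positivity) (by positivity)

lemma gdens_le_one {α : Type*} (G : SimpleGraph α) (X Y : Finset α) : gdens G X Y ≤ 1 := by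
  have h1 : (((X ×ˢ Y).filter fun p => G.Adj p.1 p.2).card : ℝ) ≤ (X.card : ℝ) * Y.card := by
    have := Finset.card_le_card (Finset.filter_subset (fun p => G.Adj p.1 p.2) (X ×ˢ Y))
    rw [Finset.card_product] at this
    exact_mod_cast this
  exact div_le_one_of_le₀ h1 (by positivity)

lemma bad_low {α : Type*} (G : SimpleGraph α) {X Y : Finset α} {ε : ℝ} (hε : 0 < ε)
    (hreg : EpsRegular G X Y ε) (hX : (0:ℝ) < X.card)
    {S : Finset α} (hSY : S ⊆ Y) (hScard : ε * Y.card ≤ S.card) (hS0 : (0:ℝ) < S.card) :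
    ((X.filter fun x =>
        ((S.filter fun y => G.Adj x y).card : ℝ) < (gdens G X Y - ε) * S.card).card : ℝ)
      < ε * X.card := by
  by_contra hcon
  push_neg at hcon
  set B := X.filter fun x =>
      ((S.filter fun y => G.Adj x y).card : ℝ) < (gdens G X Y - ε) * S.card with hBdef
  have hBsub : B ⊆ X := Finset.filter_subset _ _
  have hreg' := hreg B hBsub S hSY hcon hScard
  have hB0 : (0:ℝ) < B.card := lt_of_lt_of_le (by positivity) hcon
  have hBne : B.Nonempty := Finset.card_pos.mp (by exact_mod_cast hB0)
  have hsum : (((B ×ˢ S).filter fun p => G.Adj p.1 p.2).card : ℝ)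
      < B.card * ((gdens G X Y - ε) * S.card) := by
    rw [prod_filter_card]
    push_cast
    calc ∑ x ∈ B, ((S.filter fun y => G.Adj x y).card : ℝ)
        < ∑ _x ∈ B, (gdens G X Y - ε) * S.card :=
          Finset.sum_lt_sum_of_nonempty hBne fun x hx => (Finset.mem_filter.mp hx).2
      _ = B.card * ((gdens G X Y - ε) * S.card) := by
          rw [Finset.sum_const, nsmul_eq_mul]
  have hgBS : gdens G B S < gdens G X Y - ε := by
    have heq : gdens G B S = (((B ×ˢ S).filter fun p => G.Adj p.1 p.2).card : ℝ)
        / ((B.card : ℝ) * S.card) := rfl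
    rw [heq, div_lt_iff₀ (by positivity)]
    calc (((B ×ˢ S).filter fun p => G.Adj p.1 p.2).card : ℝ)
        < B.card * ((gdens G X Y - ε) * S.card) := hsum
      _ = (gdens G X Y - ε) * ((B.card : ℝ) * S.card) := by ring
  have := abs_le.mp hreg'
  linarith [this.1]

lemma bad_high {α : Type*} (G : SimpleGraph α) {X Y : Finset α} {ε : ℝ} (hε : 0 < ε)
    (hreg : EpsRegular G X Y ε) (hX : (0:ℝ) < X.card)
    {S : Finset α} (hSY : S ⊆ Y) (hScard : ε * Y.card ≤ S.card) (hS0 : (0:ℝ) < S.card) :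
    ((X.filter fun x =>
        (gdens G X Y + ε) * S.card < ((S.filter fun y => G.Adj x y).card : ℝ)).card : ℝ)
      < ε * X.card := by
  by_contra hcon
  push_neg at hcon
  set B := X.filter fun x =>
      (gdens G X Y + ε) * S.card < ((S.filter fun y => G.Adj x y).card : ℝ) with hBdef
  have hBsub : B ⊆ X := Finset.filter_subset _ _
  have hreg' := hreg B hBsub S hSY hcon hScard
  have hB0 : (0:ℝ) < B.card := lt_of_lt_of_le (by positivity) hcon
  have hBne : B.Nonempty := Finset.card_pos.mp (by exact_mod_cast hB0)
  have hsum : B.card * ((gdens G X Y + ε) * S.card)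
      < (((B ×ˢ S).filter fun p => G.Adj p.1 p.2).card : ℝ) := by
    rw [prod_filter_card]
    push_cast
    calc (B.card : ℝ) * ((gdens G X Y + ε) * S.card)
        = ∑ _x ∈ B, (gdens G X Y + ε) * S.card := by
          rw [Finset.sum_const, nsmul_eq_mul]
      _ < ∑ x ∈ B, ((S.filter fun y => G.Adj x y).card : ℝ) :=
          Finset.sum_lt_sum_of_nonempty hBne fun x hx => (Finset.mem_filter.mp hx).2
  have hgBS : gdens G X Y + ε < gdens G B S := by
    have heq : gdens G B S = (((B ×ˢ S).filter fun p => G.Adj p.1 p.2).card : ℝ)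
        / ((B.card : ℝ) * S.card) := rfl
    rw [heq, lt_div_iff₀ (by positivity)]
    calc (gdens G X Y + ε) * ((B.card : ℝ) * S.card)
        = B.card * ((gdens G X Y + ε) * S.card) := by ring
      _ < _ := hsum
  have := abs_le.mp hreg'
  linarith [this.2]

lemma bad_both {α : Type*} (G : SimpleGraph α) {X Y : Finset α} {ε : ℝ} (hε : 0 < ε)
    (hreg : EpsRegular G X Y ε) (hX : (0:ℝ) < X.card)
    {S : Finset α} (hSY : S ⊆ Y) (hScard : ε * Y.card ≤ S.card) (hS0 : (0:ℝ) < S.card) :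
    ((X.filter fun x =>
        ¬ ((gdens G X Y - ε) * S.card ≤ ((S.filter fun y => G.Adj x y).card : ℝ) ∧
           ((S.filter fun y => G.Adj x y).card : ℝ) ≤ (gdens G X Y + ε) * S.card)).card : ℝ)
      ≤ 2 * ε * X.card := by
  have hsub : (X.filter fun x =>
        ¬ ((gdens G X Y - ε) * S.card ≤ ((S.filter fun y => G.Adj x y).card : ℝ) ∧
           ((S.filter fun y => G.Adj x y).card : ℝ) ≤ (gdens G X Y + ε) * S.card))
      ⊆ (X.filter fun x =>
          ((S.filter fun y => G.Adj x y).card : ℝ) < (gdens G X Y - ε) * S.card)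
        ∪ (X.filter fun x =>
          (gdens G X Y + ε) * S.card < ((S.filter fun y => G.Adj x y).card : ℝ)) := by
    intro x hx
    rw [Finset.mem_filter] at hx
    rw [Finset.mem_union, Finset.mem_filter, Finset.mem_filter]
    rcases not_and_or.mp hx.2 with h | h
    · exact Or.inl ⟨hx.1, not_le.mp h⟩
    · exact Or.inr ⟨hx.1, not_le.mp h⟩
  have h1 := bad_low G hε hreg hX hSY hScard hS0
  have h2 := bad_high G hε hreg hX hSY hScard hS0
  have hle := Finset.card_le_card hsub
  have hu := Finset.card_union_le
    (X.filter fun x =>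
      ((S.filter fun y => G.Adj x y).card : ℝ) < (gdens G X Y - ε) * S.card)
    (X.filter fun x =>
      (gdens G X Y + ε) * S.card < ((S.filter fun y => G.Adj x y).card : ℝ))
  have hcast : ((X.filter fun x =>
        ¬ ((gdens G X Y - ε) * S.card ≤ ((S.filter fun y => G.Adj x y).card : ℝ) ∧
           ((S.filter fun y => G.Adj x y).card : ℝ) ≤ (gdens G X Y + ε) * S.card)).card : ℝ)
      ≤ ((X.filter fun x =>
          ((S.filter fun y => G.Adj x y).card : ℝ) < (gdens G X Y - ε) * S.card).card : ℝ)
        + ((X.filter fun x =>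
          (gdens G X Y + ε) * S.card < ((S.filter fun y => G.Adj x y).card : ℝ)).card : ℝ) := by
    exact_mod_cast le_trans hle hu
  linarith

lemma numerics {d ε e : ℝ} (hd : 0 < d) (hε : 0 < ε) (he_pos : 0 < e)
    (he8 : e ^ (8:ℕ) = ε) (he_half : e < 1/2) (hed : e < d) :
    ε < 1 ∧ ε < e ∧ 2 * ε < d ∧ 3 * ε ≤ e * (d * d) ∧ 4 * ε ≤ e * d := by
  have h5 : e ^ (5:ℕ) < (1/2:ℝ) ^ (5:ℕ) := pow_lt_pow_left₀ he_half he_pos.le (by norm_num)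
  have h6 : e ^ (6:ℕ) < (1/2:ℝ) ^ (6:ℕ) := pow_lt_pow_left₀ he_half he_pos.le (by norm_num)
  have h7 : e ^ (7:ℕ) < (1/2:ℝ) ^ (7:ℕ) := pow_lt_pow_left₀ he_half he_pos.le (by norm_num)
  have e2 := pow_pos he_pos 2
  have e3 := pow_pos he_pos 3
  refine ⟨?_, ?_, ?_, ?_, ?_⟩
  · nlinarith [mul_le_mul_of_nonneg_right h7.le he_pos.le]
  · nlinarith [mul_le_mul_of_nonneg_right h7.le he_pos.le]
  · nlinarith [mul_le_mul_of_nonneg_right h7.le he_pos.le]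
  · have h1 : 3 * ε ≤ e ^ (3:ℕ) := by
      nlinarith [mul_le_mul_of_nonneg_right h5.le e3.le]
    have h2 : e ^ (3:ℕ) ≤ e * (d * d) := by
      nlinarith [mul_nonneg (mul_nonneg he_pos.le (sub_nonneg.mpr hed.le))
        (by linarith : (0:ℝ) ≤ d + e)]
    linarith
  · have h1 : 4 * ε ≤ e ^ (2:ℕ) := by
      nlinarith [mul_le_mul_of_nonneg_right h6.le e2.le]
    have h2 : e ^ (2:ℕ) ≤ e * d := by
      nlinarith [mul_nonneg he_pos.le (sub_nonneg.mpr hed.le)]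
    linarith

lemma codeg_est {d ε e dUW dVW w Su c : ℝ} (hd : 0 < d) (hε : 0 < ε) (he_pos : 0 < e)
    (hεd' : ε < d) (hdUW : d ≤ dUW) (hdVW : d ≤ dVW) (hdUW1 : dUW ≤ 1) (hdVW1 : dVW ≤ 1)
    (hw : 0 ≤ w) (key3 : 3 * ε ≤ e * (d * d))
    (hS_lo : (dUW - ε) * w ≤ Su) (hS_hi : Su ≤ (dUW + ε) * w)
    (hc_lo : (dVW - ε) * Su ≤ c) (hc_hi : c ≤ (dVW + ε) * Su) :
    |c - dUW * dVW * w| ≤ e * (dUW * dVW * w) := by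
  have h1 : c ≤ (dVW + ε) * ((dUW + ε) * w) :=
    le_trans hc_hi (mul_le_mul_of_nonneg_left hS_hi (by linarith))
  have h2 : (dVW - ε) * ((dUW - ε) * w) ≤ c :=
    le_trans (mul_le_mul_of_nonneg_left hS_lo (by linarith)) hc_lo
  have hdd : d * d ≤ dUW * dVW := mul_le_mul hdUW hdVW hd.le (le_trans hd.le hdUW)
  have key3w : 3 * ε * w ≤ e * (d * d) * w := mul_le_mul_of_nonneg_right key3 hw
  have hddw : e * (d * d) * w ≤ e * (dUW * dVW) * w :=
    mul_le_mul_of_nonneg_right (mul_le_mul_of_nonneg_left hdd he_pos.le) hw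
  have hn1 : (0:ℝ) ≤ ε * w * (1 - dUW) := mul_nonneg (mul_nonneg hε.le hw) (by linarith)
  have hn2 : (0:ℝ) ≤ ε * w * (1 - dVW) := mul_nonneg (mul_nonneg hε.le hw) (by linarith)
  have hn3 : (0:ℝ) ≤ ε * w * (1 - ε) := mul_nonneg (mul_nonneg hε.le hw) (by linarith)
  have hn4 : (0:ℝ) ≤ ε * w * ε := mul_nonneg (mul_nonneg hε.le hw) hε.le
  rw [abs_le]
  constructor
  · nlinarith [h2, key3w, hddw, hn1, hn2, hn4]
  · nlinarith [h1, key3w, hddw, hn1, hn2, hn3]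

set_option maxHeartbeats 1600000 in
/-- in a triple of `ε`-regular pairs of density at least `d`
(with `ε < min{d⁸, 2⁻⁸}`), all but an `ε^{1/8}` fraction of the edges between
`U` and `V` lie in `(1 ± ε^{1/8})·d_{UW}·d_{VW}·|W|` triangles. -/
theorem stmt_7 {α : Type*} (G : SimpleGraph α) (U V W : Finset α)
    (hUV : Disjoint U V) (hUW : Disjoint U W) (hVW : Disjoint V W)
    (d ε : ℝ) (hd : 0 < d) (hε : 0 < ε)
    (hεd : ε < min (d ^ 8) (((2 : ℝ) ^ (8 : ℕ))⁻¹))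
    (hregUV : EpsRegular G U V ε) (hregUW : EpsRegular G U W ε) (hregVW : EpsRegular G V W ε)
    (hdUV : d ≤ gdens G U V) (hdUW : d ≤ gdens G U W) (hdVW : d ≤ gdens G V W) :
    (1 - ε ^ ((1 : ℝ) / 8)) * (((U ×ˢ V).filter fun p => G.Adj p.1 p.2).card : ℝ) ≤
      (((U ×ˢ V).filter fun p => G.Adj p.1 p.2 ∧
          |((W.filter fun w => G.Adj p.1 w ∧ G.Adj p.2 w).card : ℝ) -
              gdens G U W * gdens G V W * (W.card : ℝ)| ≤
            ε ^ ((1 : ℝ) / 8) * (gdens G U W * gdens G V W * (W.card : ℝ))).card : ℝ) := by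
  classical
  set e := ε ^ ((1 : ℝ) / 8) with he_def
  have he_pos : 0 < e := Real.rpow_pos_of_pos hε _
  have he8 : e ^ (8 : ℕ) = ε := by
    rw [he_def, ← Real.rpow_natCast (ε ^ ((1:ℝ)/8)) 8, ← Real.rpow_mul hε.le]
    norm_num
  clear_value e
  have hεd8 : ε < d ^ 8 := lt_of_lt_of_le hεd (min_le_left _ _)
  have hε2 : ε < ((2:ℝ) ^ (8:ℕ))⁻¹ := lt_of_lt_of_le hεd (min_le_right _ _)
  have he_half : e < 1 / 2 := by
    have h8 : e ^ (8:ℕ) < (1/2 : ℝ) ^ (8:ℕ) := by rw [he8]; norm_num at hε2 ⊢; linarith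
    exact lt_of_pow_lt_pow_left₀ 8 (by norm_num) h8
  have hed : e < d := by
    have h8 : e ^ (8:ℕ) < d ^ (8:ℕ) := by rw [he8]; exact_mod_cast hεd8
    exact lt_of_pow_lt_pow_left₀ 8 hd.le h8
  obtain ⟨hε1, hεe, h2ε, key3, key4⟩ := numerics hd hε he_pos he8 he_half hed
  have hεd' : ε < d := lt_trans hεe hed
  set dUW := gdens G U W with hdUWdef
  set dVW := gdens G V W with hdVWdef
  have hdUW1 : dUW ≤ 1 := gdens_le_one G U W
  have hdVW1 : dVW ≤ 1 := gdens_le_one G V W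
  clear_value dUW dVW
  -- nonemptiness
  have hU : (0:ℝ) < U.card := by
    by_contra h
    push_neg at h
    have h0 : (U.card : ℝ) = 0 := le_antisymm h (by positivity)
    have : gdens G U V = 0 := by rw [gdens, h0, zero_mul, div_zero]
    linarith
  have hV : (0:ℝ) < V.card := by
    by_contra h
    push_neg at h
    have h0 : (V.card : ℝ) = 0 := le_antisymm h (by positivity)
    have : gdens G U V = 0 := by rw [gdens, h0, mul_zero, div_zero]
    linarith
  have hW : (0:ℝ) < W.card := by
    by_contra h
    push_neg at h
    have h0 : (W.card : ℝ) = 0 := le_antisymm h (by positivity)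
    have : gdens G U W = 0 := by rw [gdens, h0, mul_zero, div_zero]
    rw [← hdUWdef] at this
    linarith
  have hw : (0:ℝ) ≤ W.card := hW.le
  have hdd : d * d ≤ dUW * dVW :=
    mul_le_mul hdUW hdVW hd.le (le_trans hd.le hdUW)
  -- the codegree predicate
  set P : α → α → Prop := fun u v =>
    |((W.filter fun w => G.Adj u w ∧ G.Adj v w).card : ℝ) - dUW * dVW * (W.card : ℝ)| ≤
      e * (dUW * dVW * (W.card : ℝ)) with hPdef
  have hGoalP : ((U ×ˢ V).filter fun p => G.Adj p.1 p.2 ∧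
        |((W.filter fun w => G.Adj p.1 w ∧ G.Adj p.2 w).card : ℝ) - dUW * dVW * (W.card : ℝ)| ≤
          e * (dUW * dVW * (W.card : ℝ)))
      = (U ×ˢ V).filter (fun p => G.Adj p.1 p.2 ∧ P p.1 p.2) := rfl
  -- the bad set in U
  set BU : Finset α := U.filter fun u =>
      ¬ ((dUW - ε) * W.card ≤ ((W.filter fun w => G.Adj u w).card : ℝ) ∧
         ((W.filter fun w => G.Adj u w).card : ℝ) ≤ (dUW + ε) * W.card) with hBUdef
  have hBUsub : BU ⊆ U := Finset.filter_subset _ _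
  have hBUcard : (BU.card : ℝ) ≤ 2 * ε * U.card := by
    have hb := bad_both G hε hregUW hU (Finset.Subset.refl W)
      (by nlinarith) hW
    rw [← hdUWdef] at hb
    exact hb
  clear_value BU
  -- fiber bound for good u
  have fiber_bound : ∀ u ∈ U \ BU,
      ((V.filter fun v => G.Adj u v ∧ ¬ P u v).card : ℝ) ≤ 2 * ε * V.card := by
    intro u hu
    rw [Finset.mem_sdiff] at hu
    have hgood : (dUW - ε) * W.card ≤ ((W.filter fun w => G.Adj u w).card : ℝ) ∧
        ((W.filter fun w => G.Adj u w).card : ℝ) ≤ (dUW + ε) * W.card := by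
      by_contra hcon
      refine hu.2 ?_
      rw [hBUdef]
      exact Finset.mem_filter.mpr ⟨hu.1, hcon⟩
    set S := W.filter fun w => G.Adj u w with hSdef
    have hSsub : S ⊆ W := Finset.filter_subset _ _
    have hS_lo : (dUW - ε) * W.card ≤ (S.card : ℝ) := hgood.1
    have hS_hi : (S.card : ℝ) ≤ (dUW + ε) * W.card := hgood.2
    clear_value S
    have hSε : ε * W.card ≤ (S.card : ℝ) := by
      have h0 : (0:ℝ) ≤ (dUW - 2*ε) * W.card := mul_nonneg (by linarith) hw
      nlinarith [hS_lo]
    have hS0 : (0:ℝ) < S.card := by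
      have := mul_pos hε hW
      linarith
    have hBV := bad_both G hε hregVW hV hSsub hSε hS0
    rw [← hdVWdef] at hBV
    refine le_trans ?_ hBV
    have hsub : (V.filter fun v => G.Adj u v ∧ ¬ P u v) ⊆
        V.filter fun v =>
          ¬ ((dVW - ε) * S.card ≤ ((S.filter fun y => G.Adj v y).card : ℝ) ∧
             ((S.filter fun y => G.Adj v y).card : ℝ) ≤ (dVW + ε) * S.card) := by
      intro v hv
      rw [Finset.mem_filter] at hv ⊢
      refine ⟨hv.1, fun hcod => hv.2.2 ?_⟩
      simp only [hPdef]
      have hc_eq : ((S.filter fun y => G.Adj v y).card : ℝ)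
          = ((W.filter fun w => G.Adj u w ∧ G.Adj v w).card : ℝ) := by
        rw [hSdef, Finset.filter_filter]
      rw [hc_eq] at hcod
      set c := ((W.filter fun w => G.Adj u w ∧ G.Adj v w).card : ℝ) with hcdef
      clear_value c
      exact codeg_est hd hε he_pos hεd' hdUW hdVW hdUW1 hdVW1 hw key3
        hS_lo hS_hi hcod.1 hcod.2
    exact_mod_cast Nat.cast_le.mpr (Finset.card_le_card hsub)
  -- global edge counts
  set Eall := (U ×ˢ V).filter (fun p => G.Adj p.1 p.2) with hEall
  set Bad := (U ×ˢ V).filter (fun p => G.Adj p.1 p.2 ∧ ¬ P p.1 p.2) with hBad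
  set Good := (U ×ˢ V).filter (fun p => G.Adj p.1 p.2 ∧ P p.1 p.2) with hGood
  clear_value Eall Bad Good
  have hsplit : Good.card + Bad.card = Eall.card := by
    rw [hGood, hBad, hEall, Finset.card_filter, Finset.card_filter, Finset.card_filter,
      ← Finset.sum_add_distrib]
    refine Finset.sum_congr rfl fun p _ => ?_
    by_cases hA : G.Adj p.1 p.2 <;> by_cases hP : P p.1 p.2 <;> simp [hA, hP]
  have hBadcard : (Bad.card : ℝ) ≤ 4 * ε * ((U.card : ℝ) * V.card) := by
    have hsum : (Bad.card : ℝ)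
        = ∑ u ∈ U, ((V.filter fun v => G.Adj u v ∧ ¬ P u v).card : ℝ) := by
      have hn : Bad.card = ∑ u ∈ U, (V.filter fun v => G.Adj u v ∧ ¬ P u v).card := by
        rw [hBad, Finset.card_filter, Finset.sum_product]
        exact Finset.sum_congr rfl fun x _ => (Finset.card_filter _ _).symm
      rw [hn]
      push_cast
      rfl
    have hsplit2 : ∑ u ∈ U \ BU, ((V.filter fun v => G.Adj u v ∧ ¬ P u v).card : ℝ)
        + ∑ u ∈ BU, ((V.filter fun v => G.Adj u v ∧ ¬ P u v).card : ℝ)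
        = ∑ u ∈ U, ((V.filter fun v => G.Adj u v ∧ ¬ P u v).card : ℝ) :=
      Finset.sum_sdiff hBUsub
    have h1 : ∑ u ∈ U \ BU, ((V.filter fun v => G.Adj u v ∧ ¬ P u v).card : ℝ)
        ≤ ∑ _u ∈ U \ BU, 2 * ε * (V.card : ℝ) := Finset.sum_le_sum fiber_bound
    have h2 : ∑ u ∈ BU, ((V.filter fun v => G.Adj u v ∧ ¬ P u v).card : ℝ)
        ≤ ∑ _u ∈ BU, (V.card : ℝ) := Finset.sum_le_sum fun u _ => by
          exact_mod_cast Nat.cast_le.mpr (Finset.card_le_card (Finset.filter_subset _ _))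
    rw [Finset.sum_const, nsmul_eq_mul] at h1 h2
    have hsd : (((U \ BU).card : ℝ)) ≤ U.card := by
      exact_mod_cast Nat.cast_le.mpr (Finset.card_le_card (Finset.sdiff_subset))
    have hVpos : (0:ℝ) ≤ V.card := hV.le
    have t1 : (((U \ BU).card : ℝ)) * (2 * ε * V.card) ≤ (U.card : ℝ) * (2 * ε * V.card) :=
      mul_le_mul_of_nonneg_right hsd (by positivity)
    have t2 : ((BU.card : ℝ)) * V.card ≤ (2 * ε * U.card) * V.card :=
      mul_le_mul_of_nonneg_right hBUcard hVpos
    rw [hsum, ← hsplit2]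
    nlinarith [t1, t2, h1, h2]
  have hEcard : d * ((U.card : ℝ) * V.card) ≤ (Eall.card : ℝ) := by
    have hg : gdens G U V = (Eall.card : ℝ) / ((U.card : ℝ) * V.card) := by
      rw [hEall]; rfl
    rw [hg] at hdUV
    exact (le_div_iff₀ (by positivity)).mp hdUV
  have hBadE : (Bad.card : ℝ) ≤ e * Eall.card := by
    calc (Bad.card : ℝ) ≤ 4 * ε * ((U.card : ℝ) * V.card) := hBadcard
      _ ≤ (e * d) * ((U.card : ℝ) * V.card) := by
          have hUV0 : (0:ℝ) ≤ (U.card : ℝ) * V.card := by positivity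
          nlinarith [key4]
      _ = e * (d * ((U.card : ℝ) * V.card)) := by ring
      _ ≤ e * Eall.card := mul_le_mul_of_nonneg_left hEcard he_pos.le
  have hs : (Good.card : ℝ) + Bad.card = Eall.card := by exact_mod_cast hsplit
  have hE0 : (0:ℝ) ≤ Eall.card := by positivity
  rw [hGoalP]
  linarith
end

section
/- For every ε > 0 and every n ≥ 1, the 3-uniform hypergraph H_ε(n) = n ⊗ Bip(G_ε(n)) has VC₂-dimension at most 1. More generally: for any bipartite graph B = (X ∪ Y, E_B) and any finite set C disjoint from X ∪ Y, the 3-uniform hypergraph H with vertex set X ∪ Y ∪ C and edge set {x y z : xy ∈ E_B, z ∈ C} has VC₂-dimension at most 1. -/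
open scoped Classical

section helpers
variable {α : Type*} [DecidableEq α] (X Y C : Finset α)

lemma edge_struct (hXY : Disjoint X Y) (hC : Disjoint C (X ∪ Y))
    (EB : Finset (α × α)) (hEB : EB ⊆ X ×ˢ Y) {u v w : α}
    (h : ∃ p ∈ EB, ∃ z ∈ C, ({u, v, w} : Finset α) = {p.1, p.2, z}) :
    (w ∈ C ∧ ((u, v) ∈ EB ∨ (v, u) ∈ EB)) ∨
    (v ∈ C ∧ ((u, w) ∈ EB ∨ (w, u) ∈ EB)) ∨
    (u ∈ C ∧ ((v, w) ∈ EB ∨ (w, v) ∈ EB)) := by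
  obtain ⟨p, hp, z, hz, heq⟩ := h
  have hx : p.1 ∈ X := (Finset.mem_product.mp (hEB hp)).1
  have hy : p.2 ∈ Y := (Finset.mem_product.mp (hEB hp)).2
  have hzX : z ∉ X := fun hzx => Finset.disjoint_left.mp hC hz (Finset.mem_union_left _ hzx)
  have hzY : z ∉ Y := fun hzy => Finset.disjoint_left.mp hC hz (Finset.mem_union_right _ hzy)
  have h12 : p.1 ≠ p.2 := fun e => Finset.disjoint_left.mp hXY hx (e ▸ hy)
  have h1z : p.1 ≠ z := fun e => hzX (e ▸ hx)
  have h2z : p.2 ≠ z := fun e => hzY (e ▸ hy)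
  have h1m : p.1 = u ∨ p.1 = v ∨ p.1 = w := by
    have : p.1 ∈ ({u, v, w} : Finset α) := by rw [heq]; simp
    simpa [eq_comm] using this
  have h2m : p.2 = u ∨ p.2 = v ∨ p.2 = w := by
    have : p.2 ∈ ({u, v, w} : Finset α) := by rw [heq]; simp
    simpa [eq_comm] using this
  have hzm : z = u ∨ z = v ∨ z = w := by
    have : z ∈ ({u, v, w} : Finset α) := by rw [heq]; simp
    simpa [eq_comm] using this
  have main : ∀ s t : α, (p.1 = s ∨ p.1 = t) → (p.2 = s ∨ p.2 = t) →
      (s, t) ∈ EB ∨ (t, s) ∈ EB := by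
    intro s t h1 h2
    rcases h1 with h1 | h1 <;> rcases h2 with h2 | h2
    · exact absurd (h1.trans h2.symm) h12
    · left; rw [← h1, ← h2]; simpa using hp
    · right; rw [← h1, ← h2]; simpa using hp
    · exact absurd (h1.trans h2.symm) h12
  rcases hzm with hze | hze | hze
  · refine Or.inr (Or.inr ⟨hze ▸ hz, main _ _ ?_ ?_⟩)
    · rcases h1m with e | e | e
      exacts [absurd (e.trans hze.symm) h1z, Or.inl e, Or.inr e]
    · rcases h2m with e | e | e
      exacts [absurd (e.trans hze.symm) h2z, Or.inl e, Or.inr e]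
  · refine Or.inr (Or.inl ⟨hze ▸ hz, main _ _ ?_ ?_⟩)
    · rcases h1m with e | e | e
      exacts [Or.inl e, absurd (e.trans hze.symm) h1z, Or.inr e]
    · rcases h2m with e | e | e
      exacts [Or.inl e, absurd (e.trans hze.symm) h2z, Or.inr e]
  · refine Or.inl ⟨hze ▸ hz, main _ _ ?_ ?_⟩
    · rcases h1m with e | e | e
      exacts [Or.inl e, Or.inr e, absurd (e.trans hze.symm) h1z]
    · rcases h2m with e | e | e
      exacts [Or.inl e, Or.inr e, absurd (e.trans hze.symm) h2z]

lemma pair_mem (X Y : Finset α) (EB : Finset (α × α)) (hEB : EB ⊆ X ×ˢ Y) {s t : α}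
    (h : (s, t) ∈ EB ∨ (t, s) ∈ EB) : s ∈ X ∪ Y ∧ t ∈ X ∪ Y := by
  rcases h with h | h <;>
    have := Finset.mem_product.mp (hEB h) <;>
    constructor <;> simp [Finset.mem_union] <;> tauto

end helpers

set_option maxHeartbeats 2000000 in
/-- let `B` be a bipartite graph with parts `X, Y` and edge set
`EB ⊆ X × Y`, and let `C` be a finite set disjoint from `X ∪ Y`.  The 3-uniform
hypergraph on `X ∪ Y ∪ C` whose edges are the sets `{x, y, z}` with `(x, y) ∈ EB`
and `z ∈ C` has VC₂-dimension at most 1: there is no configuration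
`a₁, a₂, b₁, b₂` together with vertices `c_S` (for `S ⊆ [2]²`) such that
`{aᵢ, bⱼ, c_S}` is an edge iff `(i, j) ∈ S`. -/
theorem stmt_9 {α : Type*} [DecidableEq α] (X Y C : Finset α)
    (hXY : Disjoint X Y) (hC : Disjoint C (X ∪ Y))
    (EB : Finset (α × α)) (hEB : EB ⊆ X ×ˢ Y) :
    ¬ ∃ (a b : Fin 2 → α) (c : Finset (Fin 2 × Fin 2) → α),
      (∀ i, a i ∈ X ∪ Y ∪ C) ∧ (∀ j, b j ∈ X ∪ Y ∪ C) ∧ (∀ S, c S ∈ X ∪ Y ∪ C) ∧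
      ∀ (S : Finset (Fin 2 × Fin 2)) (i j : Fin 2),
        (∃ p ∈ EB, ∃ z ∈ C, ({a i, b j, c S} : Finset α) = {p.1, p.2, z}) ↔ (i, j) ∈ S := by
  rintro ⟨a, b, c, -, -, -, h⟩
  set S1 : Finset (Fin 2 × Fin 2) := {(0, 0), (1, 1)} with hS1
  set S2 : Finset (Fin 2 × Fin 2) := {(0, 1), (1, 0)} with hS2
  have notC : ∀ x ∈ C, x ∉ X ∪ Y := fun x hx => Finset.disjoint_left.mp hC hx
  -- edge facts
  have e00_1 := (h S1 0 0).mpr (by decide)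
  have e11_1 := (h S1 1 1).mpr (by decide)
  have n01_1 : ¬ (∃ p ∈ EB, ∃ z ∈ C, ({a 0, b 1, c S1} : Finset α) = {p.1, p.2, z}) :=
    fun he => by have := (h S1 0 1).mp he; revert this; decide
  have n10_1 : ¬ (∃ p ∈ EB, ∃ z ∈ C, ({a 1, b 0, c S1} : Finset α) = {p.1, p.2, z}) :=
    fun he => by have := (h S1 1 0).mp he; revert this; decide
  have e01_2 := (h S2 0 1).mpr (by decide)
  have e10_2 := (h S2 1 0).mpr (by decide)
  have n00_2 : ¬ (∃ p ∈ EB, ∃ z ∈ C, ({a 0, b 0, c S2} : Finset α) = {p.1, p.2, z}) :=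
    fun he => by have := (h S2 0 0).mp he; revert this; decide
  have st00 := edge_struct X Y C hXY hC EB hEB e00_1
  have st11 := edge_struct X Y C hXY hC EB hEB e11_1
  have st01 := edge_struct X Y C hXY hC EB hEB e01_2
  have st10 := edge_struct X Y C hXY hC EB hEB e10_2
  rcases st00 with ⟨hc1C, hpab⟩ | ⟨hb0C, hpa0c⟩ | ⟨ha0C, hpb0c⟩
  · -- c S1 ∈ C, Pair (a 0) (b 0)
    have ha0 : a 0 ∈ X ∪ Y := (pair_mem X Y EB hEB hpab).1
    have hb0 : b 0 ∈ X ∪ Y := (pair_mem X Y EB hEB hpab).2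
    have hc1XY : c S1 ∉ X ∪ Y := notC _ hc1C
    have hpab1 : (a 1, b 1) ∈ EB ∨ (b 1, a 1) ∈ EB := by
      rcases st11 with ⟨_, h2⟩ | ⟨_, h2⟩ | ⟨_, h2⟩
      · exact h2
      · exact absurd (pair_mem X Y EB hEB h2).2 hc1XY
      · exact absurd (pair_mem X Y EB hEB h2).2 hc1XY
    have ha1 : a 1 ∈ X ∪ Y := (pair_mem X Y EB hEB hpab1).1
    have hb1 : b 1 ∈ X ∪ Y := (pair_mem X Y EB hEB hpab1).2
    have hc2C : c S2 ∈ C := by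
      rcases st01 with ⟨h1, _⟩ | ⟨h1, _⟩ | ⟨h1, _⟩
      · exact h1
      · exact absurd hb1 (notC _ h1)
      · exact absurd ha0 (notC _ h1)
    have hedge : ∃ p ∈ EB, ∃ z ∈ C, ({a 0, b 0, c S2} : Finset α) = {p.1, p.2, z} := by
      rcases hpab with hp | hp
      · exact ⟨(a 0, b 0), hp, c S2, hc2C, rfl⟩
      · exact ⟨(b 0, a 0), hp, c S2, hc2C, Finset.insert_comm _ _ _⟩
    exact n00_2 hedge
  · -- b 0 ∈ C, Pair (a 0) (c S1)
    have hc1 : c S1 ∈ X ∪ Y := (pair_mem X Y EB hEB hpa0c).2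
    rcases st11 with ⟨h1, _⟩ | ⟨hb1C, hpa1c⟩ | ⟨ha1C, hpb1c⟩
    · exact absurd hc1 (notC _ h1)
    · -- b 1 ∈ C : build edge {a 0, b 1, c S1}, contradict n01_1
      have hedge : ∃ p ∈ EB, ∃ z ∈ C, ({a 0, b 1, c S1} : Finset α) = {p.1, p.2, z} := by
        rcases hpa0c with hp | hp
        · exact ⟨(a 0, c S1), hp, b 1, hb1C, by
            rw [Finset.pair_comm (b 1) (c S1)]⟩
        · exact ⟨(c S1, a 0), hp, b 1, hb1C, by
            rw [Finset.pair_comm (b 1) (c S1), Finset.insert_comm]⟩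
      exact n01_1 hedge
    · -- a 1 ∈ C : st10 gives contradiction since a 1 and b 0 both in C
      rcases st10 with ⟨_, h2⟩ | ⟨_, h2⟩ | ⟨_, h2⟩
      · exact absurd (pair_mem X Y EB hEB h2).1 (notC _ ha1C)
      · exact absurd (pair_mem X Y EB hEB h2).1 (notC _ ha1C)
      · exact absurd (pair_mem X Y EB hEB h2).1 (notC _ hb0C)
  · -- a 0 ∈ C, Pair (b 0) (c S1)
    have hc1 : c S1 ∈ X ∪ Y := (pair_mem X Y EB hEB hpb0c).2
    rcases st11 with ⟨h1, _⟩ | ⟨hb1C, hpa1c⟩ | ⟨ha1C, hpb1c⟩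
    · exact absurd hc1 (notC _ h1)
    · -- b 1 ∈ C : st01 contradiction since a 0 and b 1 both in C
      rcases st01 with ⟨_, h2⟩ | ⟨_, h2⟩ | ⟨_, h2⟩
      · exact absurd (pair_mem X Y EB hEB h2).1 (notC _ ha0C)
      · exact absurd (pair_mem X Y EB hEB h2).1 (notC _ ha0C)
      · exact absurd (pair_mem X Y EB hEB h2).1 (notC _ hb1C)
    · -- a 1 ∈ C : build edge {a 1, b 0, c S1}, contradict n10_1
      have hedge : ∃ p ∈ EB, ∃ z ∈ C, ({a 1, b 0, c S1} : Finset α) = {p.1, p.2, z} := by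
        rcases hpb0c with hp | hp
        · exact ⟨(b 0, c S1), hp, a 1, ha1C, by
            rw [Finset.insert_comm (a 1), Finset.pair_comm (a 1) (c S1)]⟩
        · exact ⟨(c S1, b 0), hp, a 1, ha1C, by
            rw [Finset.insert_comm (a 1), Finset.pair_comm (a 1) (c S1), Finset.insert_comm (b 0)]⟩
      exact n10_1 hedge
end
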